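/- arXiv:2412.12667 — 2 statements merged into one kernel-verified Lean document; each statement's English description precedes it below -/
import Mathlib

section
/- (IRLS descent step for W.) Let E be a real n × d matrix, Z and Rᵀ real n × c matrices, and α > 0. Let W and W' be real d × c matrices such that every row of W is nonzero, and let D be the d × d diagonal matrix with diagonal entries D(j,j) = 1 / (2‖W(j,:)‖₂). If the reweighted quadratic objective satisfies ‖E W' − Z − Rᵀ‖_F² + α Σ_j ‖W'(j,:)‖₂² / (2‖W(j,:)‖₂) ≤ ‖E W − Z − Rᵀ‖_F² + α Σ_j ‖W(j,:)‖₂² / (2‖W(j,:)‖₂), then the original objective satisfies ‖E W' − Z − Rᵀ‖_F² + α ‖W'‖_{2,1} ≤ ‖E W − Z − Rᵀ‖_F² + α ‖W‖_{2,1}. -/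
/-- The Euclidean norm of the `j`-th row of a real matrix `M`. -/
noncomputable def rowNorm {m n : ℕ} (M : Matrix (Fin m) (Fin n) ℝ) (j : Fin m) : ℝ :=
  Real.sqrt (∑ k, (M j k) ^ 2)

/-- The ℓ2,1-norm of a real matrix: the sum of the Euclidean norms of its rows. -/
noncomputable def norm21 {m n : ℕ} (M : Matrix (Fin m) (Fin n) ℝ) : ℝ :=
  ∑ j, rowNorm M j

/-- The squared Frobenius norm of a real matrix. -/
noncomputable def frobSq {m n : ℕ} (M : Matrix (Fin m) (Fin n) ℝ) : ℝ :=
  ∑ i, ∑ j, (M i j) ^ 2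

lemma rowNorm_pos {m n : ℕ} (M : Matrix (Fin m) (Fin n) ℝ) (j : Fin m)
    (h : M j ≠ 0) : 0 < rowNorm M j := by
  apply Real.sqrt_pos.2
  have : ∃ k, M j k ≠ 0 := by
    by_contra hc
    push_neg at hc
    exact h (funext hc)
  obtain ⟨k, hk⟩ := this
  exact Finset.sum_pos' (fun i _ => sq_nonneg _) ⟨k, Finset.mem_univ k, by positivity⟩

/-- IRLS descent step for `W`: if the reweighted quadratic objective (with diagonal
reweighting matrix `D(j,j) = 1/(2‖W(j,:)‖₂)`) does not increase when passing from `W`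
to `W'`, then neither does the original ℓ2,1-regularized objective. -/
theorem irls_descent_W (n d c : ℕ) (E : Matrix (Fin n) (Fin d) ℝ)
    (Z Rt : Matrix (Fin n) (Fin c) ℝ) (α : ℝ) (hα : 0 < α)
    (W W' : Matrix (Fin d) (Fin c) ℝ) (hW : ∀ j, W j ≠ 0)
    (D : Matrix (Fin d) (Fin d) ℝ)
    (hD : D = Matrix.diagonal fun j => 1 / (2 * rowNorm W j))
    (hstep : frobSq (E * W' - Z - Rt) + α * ∑ j, (rowNorm W' j) ^ 2 / (2 * rowNorm W j) ≤
      frobSq (E * W - Z - Rt) + α * ∑ j, (rowNorm W j) ^ 2 / (2 * rowNorm W j)) :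
    frobSq (E * W' - Z - Rt) + α * norm21 W' ≤ frobSq (E * W - Z - Rt) + α * norm21 W := by
  have key : norm21 W' - (∑ j, (rowNorm W' j) ^ 2 / (2 * rowNorm W j)) ≤
      norm21 W - (∑ j, (rowNorm W j) ^ 2 / (2 * rowNorm W j)) := by
    unfold norm21
    rw [← Finset.sum_sub_distrib, ← Finset.sum_sub_distrib]
    apply Finset.sum_le_sum
    intro j _
    have hb : 0 < rowNorm W j := rowNorm_pos W j (hW j)
    have ha : 0 ≤ rowNorm W' j := Real.sqrt_nonneg _
    have h2 : (0:ℝ) ≤ (rowNorm W' j - rowNorm W j) ^ 2 := sq_nonneg _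
    have h3 : rowNorm W' j ^ 2 / (2 * rowNorm W j) * (2 * rowNorm W j) = rowNorm W' j ^ 2 :=
      div_mul_cancel₀ _ (by linarith)
    have h4 : rowNorm W j ^ 2 / (2 * rowNorm W j) * (2 * rowNorm W j) = rowNorm W j ^ 2 :=
      div_mul_cancel₀ _ (by linarith)
    nlinarith [sq_nonneg (rowNorm W' j - rowNorm W j)]
  nlinarith [key, hstep, hα.le]
end

section
/- (IRLS descent step for R.) Let E be a real n × d matrix, W a real d × c matrix, Z a real n × c matrix, and β > 0. Let R and R' be real c × n matrices such that every row of R is nonzero, and let D be the c × c diagonal matrix with diagonal entries D(j,j) = 1 / (2‖R(j,:)‖₂). If the reweighted quadratic objective satisfies ‖E W − Z − R'ᵀ‖_F² + β Σ_j ‖R'(j,:)‖₂² / (2‖R(j,:)‖₂) ≤ ‖E W − Z − Rᵀ‖_F² + β Σ_j ‖R(j,:)‖₂² / (2‖R(j,:)‖₂), then ‖E W − Z − R'ᵀ‖_F² + β ‖R'‖_{2,1} ≤ ‖E W − Z − Rᵀ‖_F² + β ‖R‖_{2,1}. -/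
lemma rowNorm_nonneg {m n : ℕ} (M : Matrix (Fin m) (Fin n) ℝ) (j : Fin m) :
    0 ≤ rowNorm M j := Real.sqrt_nonneg _

/-- IRLS descent step for `R`. -/
theorem irls_descent_R (n d c : ℕ) (E : Matrix (Fin n) (Fin d) ℝ)
    (W : Matrix (Fin d) (Fin c) ℝ) (Z : Matrix (Fin n) (Fin c) ℝ) (β : ℝ) (hβ : 0 < β)
    (R R' : Matrix (Fin c) (Fin n) ℝ) (hR : ∀ j, R j ≠ 0)
    (D : Matrix (Fin c) (Fin c) ℝ)
    (hD : D = Matrix.diagonal fun j => 1 / (2 * rowNorm R j))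
    (hstep : frobSq (E * W - Z - R'.transpose) +
        β * ∑ j, (rowNorm R' j) ^ 2 / (2 * rowNorm R j) ≤
      frobSq (E * W - Z - R.transpose) +
        β * ∑ j, (rowNorm R j) ^ 2 / (2 * rowNorm R j)) :
    frobSq (E * W - Z - R'.transpose) + β * norm21 R' ≤
      frobSq (E * W - Z - R.transpose) + β * norm21 R := by
  have key : ∀ j, rowNorm R' j - (rowNorm R' j) ^ 2 / (2 * rowNorm R j) ≤
      rowNorm R j - (rowNorm R j) ^ 2 / (2 * rowNorm R j) := by
    intro j
    have hb := rowNorm_pos R j (hR j)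
    have ha := rowNorm_nonneg R' j
    set a := rowNorm R' j
    set b := rowNorm R j
    have h2b : (0:ℝ) < 2 * b := by linarith
    have e1 : a ^ 2 / (2 * b) * (2 * b) = a ^ 2 := div_mul_cancel₀ _ (ne_of_gt h2b)
    have e2 : b ^ 2 / (2 * b) * (2 * b) = b ^ 2 := div_mul_cancel₀ _ (ne_of_gt h2b)
    nlinarith [sq_nonneg (a - b), e1, e2, h2b]
  have hsum : norm21 R' - ∑ j, (rowNorm R' j) ^ 2 / (2 * rowNorm R j) ≤
      norm21 R - ∑ j, (rowNorm R j) ^ 2 / (2 * rowNorm R j) := by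
    unfold norm21
    rw [← Finset.sum_sub_distrib, ← Finset.sum_sub_distrib]
    exact Finset.sum_le_sum fun j _ => key j
  nlinarith [hsum, hstep]
end
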